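/- Let φ(ȳ) be a property of runs parameterized by global variables ȳ, and let Γ' be the system obtained from Γ by adding ȳ as artifact variables that are propagated (unchanged) by every service. Then every run of Γ' projects to a run of Γ with a fixed valuation of ȳ, and conversely every run of Γ paired with any fixed valuation ν of ȳ lifts to a run of Γ'. Consequently Γ satisfies ∀ȳ φ(ȳ) iff Γ' satisfies φ. -/
import Mathlib


/-- A run of the system `Γ` with initial condition `Init` and service transitions `T`. -/
def IsRun {V T : Type*} (Init : V → Prop) (Tr : T → V → V → Prop) (ρ : ℕ → V) : Prop :=
  Init (ρ 0) ∧ ∀ i : ℕ, ∃ σ : T, Tr σ (ρ i) (ρ (i + 1))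

/-- A run of the extended system `Γ'` where the global variables (second component) are
propagated unchanged by every service. -/
def IsRunExt {V W T : Type*} (Init : V → Prop) (Tr : T → V → V → Prop)
    (ρ' : ℕ → V × W) : Prop :=
  Init (ρ' 0).1 ∧ ∀ i : ℕ, ∃ σ : T, Tr σ (ρ' i).1 (ρ' (i + 1)).1 ∧ (ρ' (i + 1)).2 = (ρ' i).2

/-- Runs of the extended system are exactly runs of `Γ` paired with a constant valuation
of the global variables; consequently `Γ ⊨ ∀ȳ φ(ȳ)` iff `Γ' ⊨ φ`. -/
theorem extended_system_runs_and_satisfaction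
    {V W T : Type*} (Init : V → Prop) (Tr : T → V → V → Prop)
    (φ : (ℕ → V) → W → Prop) :
    (∀ ρ' : ℕ → V × W, IsRunExt Init Tr ρ' →
        (∀ i : ℕ, (ρ' i).2 = (ρ' 0).2) ∧ IsRun Init Tr fun i => (ρ' i).1) ∧
      (∀ (ρ : ℕ → V) (w : W), IsRun Init Tr ρ → IsRunExt Init Tr fun i => (ρ i, w)) ∧
      ((∀ ρ : ℕ → V, IsRun Init Tr ρ → ∀ w : W, φ ρ w) ↔
        ∀ ρ' : ℕ → V × W, IsRunExt Init Tr ρ' → φ (fun i => (ρ' i).1) (ρ' 0).2) := by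
  have proj : ∀ ρ' : ℕ → V × W, IsRunExt Init Tr ρ' →
      (∀ i : ℕ, (ρ' i).2 = (ρ' 0).2) ∧ IsRun Init Tr fun i => (ρ' i).1 := by
    intro ρ' h
    have hconst : ∀ i : ℕ, (ρ' i).2 = (ρ' 0).2 := by
      intro i
      induction i with
      | zero => rfl
      | succ n ih =>
        obtain ⟨σ, _, h2⟩ := h.2 n
        rw [h2, ih]
    exact ⟨hconst, h.1, fun i => (h.2 i).imp fun σ hσ => hσ.1⟩
  refine ⟨proj, ?_, ?_⟩
  · intro ρ w h
    exact ⟨h.1, fun i => (h.2 i).imp fun σ hσ => ⟨hσ, rfl⟩⟩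
  · constructor
    · intro H ρ' h
      obtain ⟨hconst, hrun⟩ := proj ρ' h
      exact H _ hrun _
    · intro H ρ hrun w
      exact H (fun i => (ρ i, w)) ⟨hrun.1, fun i => (hrun.2 i).imp fun σ hσ => ⟨hσ, rfl⟩⟩
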